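/- There exist a complex separable Hilbert space H, a contraction T on H of class C_{·1}, and a vector x ∈ H such that x lies in ⋂_{n∈ℕ} Tⁿ(H) (i.e. x is the origin of a backward sequence) but x ∉ M(T) (i.e. x admits no bounded backward sequence). In particular, M(T) can be a proper subset of T^∞(H) := ⋂_{n∈ℕ} Tⁿ(H) even for C_{·1} contractions. -/

import Mathlib

noncomputable section
open Filter ContinuousLinearMap
open scoped ENNReal

namespace Stmt8

abbrev ET : (ℕ × ℕ) → Type := fun _ => ℂ
abbrev Hsp : Type := ↥(lp ET 2)

lemma two_toReal : (2 : ℝ≥0∞).toReal = 2 := by simp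

lemma hp2 : 0 < (2:ℝ≥0∞).toReal := by rw [two_toReal]; norm_num

lemma key_sum (f : Hsp) (σ : ℕ×ℕ → ℕ×ℕ) (a : ℕ×ℕ → ℂ)
    (ha : ∀ p, ‖a p‖ ≤ 1) (hσ : Set.InjOn σ {p | a p ≠ 0}) (s : Finset (ℕ×ℕ)) :
    ∑ p ∈ s, ‖a p * f (σ p)‖ ^ (2:ℝ≥0∞).toReal ≤ ‖f‖ ^ (2:ℝ≥0∞).toReal := by
  classical
  have h1 : ∑ p ∈ s, ‖a p * f (σ p)‖ ^ (2:ℝ≥0∞).toReal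
      = ∑ p ∈ s.filter (fun p => a p ≠ 0), ‖a p * f (σ p)‖ ^ (2:ℝ≥0∞).toReal := by
    refine (Finset.sum_filter_of_ne ?_).symm
    intro p _ h
    by_contra h0
    simp [h0, Real.zero_rpow hp2.ne'] at h
  rw [h1]
  calc ∑ p ∈ s.filter (fun p => a p ≠ 0), ‖a p * f (σ p)‖ ^ (2:ℝ≥0∞).toReal
      ≤ ∑ p ∈ s.filter (fun p => a p ≠ 0), ‖f (σ p)‖ ^ (2:ℝ≥0∞).toReal := by
        refine Finset.sum_le_sum fun p _ => ?_
        refine Real.rpow_le_rpow (norm_nonneg _) ?_ hp2.le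
        rw [norm_mul]
        exact mul_le_of_le_one_left (norm_nonneg _) (ha p)
    _ = ∑ q ∈ (s.filter (fun p => a p ≠ 0)).image σ, ‖f q‖ ^ (2:ℝ≥0∞).toReal := by
        exact (Finset.sum_image (f := fun q => ‖f q‖ ^ (2:ℝ≥0∞).toReal)
          (g := σ) (s := s.filter (fun p => a p ≠ 0)) (fun p hp q hq hpq =>
          hσ (Finset.mem_filter.1 hp).2 (Finset.mem_filter.1 hq).2 hpq)).symm
    _ ≤ ‖f‖ ^ (2:ℝ≥0∞).toReal := lp.sum_rpow_le_norm_rpow hp2 f _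

def op (σ : ℕ×ℕ → ℕ×ℕ) (a : ℕ×ℕ → ℂ) (ha : ∀ p, ‖a p‖ ≤ 1)
    (hσ : Set.InjOn σ {p | a p ≠ 0}) : Hsp →L[ℂ] Hsp :=
  LinearMap.mkContinuous
    { toFun := fun f => (⟨fun p => a p * f (σ p), memℓp_gen' (key_sum f σ a ha hσ)⟩ : Hsp)
      map_add' := fun f g => by
        ext p
        simp only [lp.coeFn_add, Pi.add_apply]
        change a p * (f + g) (σ p) = a p * f (σ p) + a p * g (σ p)
        rw [lp.coeFn_add]
        simp [mul_add]
      map_smul' := fun c f => by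
        ext p
        change a p * (c • f) (σ p) = (c • (⟨fun p => a p * f (σ p), _⟩ : Hsp)) p
        rw [lp.coeFn_smul, lp.coeFn_smul]
        simp
        ring }
    1 (fun f => by
        rw [one_mul]
        exact lp.norm_le_of_forall_sum_le hp2 (norm_nonneg _)
          (fun s => key_sum f σ a ha hσ s))

lemma op_apply (σ : ℕ×ℕ → ℕ×ℕ) (a : ℕ×ℕ → ℂ) (ha) (hσ) (f : Hsp) (p : ℕ×ℕ) :
    (op σ a ha hσ f) p = a p * f (σ p) := by unfold op; rfl

lemma op_norm_le (σ : ℕ×ℕ → ℕ×ℕ) (a : ℕ×ℕ → ℂ) (ha) (hσ) (f : Hsp) :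
    ‖op σ a ha hσ f‖ ≤ ‖f‖ :=
  lp.norm_le_of_forall_sum_le hp2 (norm_nonneg _) (fun s => key_sum f σ a ha hσ s)

/-! weights -/

def cw (k : ℕ) : ℂ := ((k:ℂ)+1)⁻¹

lemma cw_ne_zero (k : ℕ) : cw k ≠ 0 := by
  exact inv_ne_zero (Nat.cast_add_one_ne_zero k)

lemma norm_cw (k : ℕ) : ‖cw k‖ = ((k:ℝ)+1)⁻¹ := by
  rw [cw, norm_inv]
  congr 1
  have : ((k:ℂ)+1) = ((k+1 : ℕ) : ℂ) := by push_cast; ring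
  rw [this, Complex.norm_natCast]
  push_cast; ring

lemma norm_cw_le_one (k : ℕ) : ‖cw k‖ ≤ 1 := by
  rw [norm_cw]
  rw [inv_le_one_iff₀]
  right; linarith [Nat.cast_nonneg (α := ℝ) k]

lemma cw_inv_pos (k : ℕ) : (0:ℝ) < ((k:ℝ)+1)⁻¹ := by
  apply inv_pos.2; linarith [Nat.cast_nonneg (α := ℝ) k]

def w (k j : ℕ) : ℂ := if j = k+1 then cw k else 1

lemma conj_w (k j : ℕ) : (starRingEnd ℂ) (w k j) = w k j := by
  unfold w cw
  split <;> simp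

lemma norm_w_le_one (k j : ℕ) : ‖w k j‖ ≤ 1 := by
  unfold w; split
  · exact norm_cw_le_one k
  · simp

lemma norm_w_ge (k j : ℕ) : ((k:ℝ)+1)⁻¹ ≤ ‖w k j‖ := by
  unfold w; split
  · rw [norm_cw]
  · rw [norm_one]
    rw [inv_le_one_iff₀]; right; linarith [Nat.cast_nonneg (α := ℝ) k]

lemma w_ne_zero (k j : ℕ) : w k j ≠ 0 := by
  unfold w; split
  · exact cw_ne_zero k
  · exact one_ne_zero

/-! The operators T and S -/

def σT : ℕ×ℕ → ℕ×ℕ := fun p => (p.1, p.2+1)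
def aT : ℕ×ℕ → ℂ := fun p => w p.1 (p.2+1)
def σS : ℕ×ℕ → ℕ×ℕ := fun p => (p.1, p.2-1)
def aS : ℕ×ℕ → ℂ := fun p => if p.2 = 0 then 0 else w p.1 p.2

lemma haT : ∀ p, ‖aT p‖ ≤ 1 := fun p => norm_w_le_one _ _
lemma hσT : Set.InjOn σT {p | aT p ≠ 0} := by
  intro p _ q _ h
  simp only [σT, Prod.mk.injEq] at h
  exact Prod.ext h.1 (by omega)
lemma haS : ∀ p, ‖aS p‖ ≤ 1 := by
  intro p; unfold aS; split
  · simp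
  · exact norm_w_le_one _ _
lemma hσS : Set.InjOn σS {p | aS p ≠ 0} := by
  intro p hp q hq h
  have hp2 : p.2 ≠ 0 := fun h0 => hp (by simp [aS, h0])
  have hq2 : q.2 ≠ 0 := fun h0 => hq (by simp [aS, h0])
  simp only [σS, Prod.mk.injEq] at h
  exact Prod.ext h.1 (by omega)

def Top : Hsp →L[ℂ] Hsp := op σT aT haT hσT
def Sop : Hsp →L[ℂ] Hsp := op σS aS haS hσS

lemma Top_apply (f : Hsp) (k j : ℕ) : (Top f) (k, j) = w k (j+1) * f (k, j+1) :=
  op_apply σT aT haT hσT f (k, j)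

lemma Sop_apply_succ (f : Hsp) (k j : ℕ) : (Sop f) (k, j+1) = w k (j+1) * f (k, j) := by
  have := op_apply σS aS haS hσS f (k, j+1)
  simpa [Sop, aS, σS] using this

lemma Sop_apply_zero (f : Hsp) (k : ℕ) : (Sop f) (k, 0) = 0 := by
  have := op_apply σS aS haS hσS f (k, 0)
  simpa [Sop, aS, σS] using this

/-! products of weights -/

def P (k j n : ℕ) : ℂ := ∏ i ∈ Finset.Ioc j (j+n), w k i

lemma P_zero (k j : ℕ) : P k j 0 = 1 := by simp [P]

lemma P_succ (k j n : ℕ) : P k j (n+1) = P k j n * w k (j+n+1) := by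
  unfold P
  exact Finset.prod_Ioc_succ_top (Nat.le_add_right _ _) _

lemma P_eq (k j n : ℕ) : P k j n = if k+1 ∈ Finset.Ioc j (j+n) then cw k else 1 := by
  unfold P w
  exact Finset.prod_ite_eq' _ _ _

lemma P_ne_zero (k j n : ℕ) : P k j n ≠ 0 := by
  rw [P_eq]; split
  · exact cw_ne_zero k
  · exact one_ne_zero

lemma norm_P_ge (k j n : ℕ) : ((k:ℝ)+1)⁻¹ ≤ ‖P k j n‖ := by
  rw [P_eq]; split
  · rw [norm_cw]
  · rw [norm_one, inv_le_one_iff₀]; right; linarith [Nat.cast_nonneg (α := ℝ) k]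

lemma P_zero_left (k n : ℕ) (hk : k+1 ≤ n) : P k 0 n = cw k := by
  rw [P_eq]
  rw [if_pos]
  simp [Finset.mem_Ioc]
  omega

/-! powers -/

lemma Top_pow : ∀ (n : ℕ) (f : Hsp) (k j : ℕ),
    ((Top ^ n) f) (k, j) = P k j n * f (k, j+n)
  | 0, f, k, j => by simp [P_zero]
  | n+1, f, k, j => by
    rw [pow_succ, ContinuousLinearMap.mul_apply, Top_pow n (Top f) k j, Top_apply]
    rw [P_succ]
    rw [show j + (n+1) = j + n + 1 from rfl]
    ring

lemma Sop_pow : ∀ (n : ℕ) (f : Hsp) (k j : ℕ),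
    ((Sop ^ n) f) (k, j+n) = P k j n * f (k, j)
  | 0, f, k, j => by simp [P_zero]
  | n+1, f, k, j => by
    rw [show j + (n+1) = (j + n) + 1 from rfl, pow_succ', ContinuousLinearMap.mul_apply,
      Sop_apply_succ, Sop_pow n f k j, P_succ]
    ring

/-! adjoint -/

lemma adjoint_Top : ContinuousLinearMap.adjoint Top = Sop := by
  have h : Sop = ContinuousLinearMap.adjoint Top := by
    rw [ContinuousLinearMap.eq_adjoint_iff]
    intro x y
    rw [lp.inner_eq_tsum, lp.inner_eq_tsum]
    have hinj : Function.Injective (fun p : ℕ×ℕ => (p.1, p.2+1)) := by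
      intro p q h
      simp only [Prod.mk.injEq] at h
      exact Prod.ext h.1 (by omega)
    have hsupp : Function.support
        (fun p : ℕ×ℕ => (inner ℂ ((Sop x) p) (y p) : ℂ)) ⊆
          Set.range (fun p : ℕ×ℕ => (p.1, p.2+1)) := by
      intro q hq
      rcases q with ⟨k, j⟩
      cases j with
      | zero =>
        exfalso
        apply hq
        show (inner ℂ ((Sop x) (k, 0)) (y (k, 0)) : ℂ) = 0
        rw [Sop_apply_zero]
        simp
      | succ j => exact ⟨(k, j), rfl⟩
    rw [← Function.Injective.tsum_eq hinj hsupp]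
    apply tsum_congr
    intro p
    rcases p with ⟨k, j⟩
    rw [Sop_apply_succ, Top_apply]
    simp only [RCLike.inner_apply, map_mul, conj_w]
    ring
  exact h.symm

/-! the vector x and preimages z -/

lemma rpow_toReal_two (x : ℝ) : x ^ (2:ℝ≥0∞).toReal = x^(2:ℕ) := by
  rw [two_toReal, show ((2:ℝ)) = ((2:ℕ):ℝ) by norm_num, Real.rpow_natCast]

lemma base_summable : Summable (fun k : ℕ => (((k:ℝ)+1)⁻¹) ^ (2:ℕ)) := by
  have h1 : Summable (fun n : ℕ => ((n:ℝ) ^ (2:ℕ))⁻¹) :=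
    Real.summable_nat_pow_inv.mpr one_lt_two
  have h2 := h1.comp_injective (i := fun k : ℕ => k+1)
    (fun a b h => by simpa using h)
  apply h2.congr
  intro k
  simp only [Function.comp_apply]
  push_cast
  rw [inv_pow]

lemma mem_xel : Memℓp (fun p : ℕ×ℕ => if p.2 = 0 then cw p.1 else 0) 2 := by
  apply memℓp_gen
  have hinj : Function.Injective (fun k : ℕ => ((k, 0) : ℕ×ℕ)) := by
    intro a b h; simpa using h
  have hsupp : ∀ q ∉ Set.range (fun k : ℕ => ((k, 0) : ℕ×ℕ)),
      ‖if q.2 = 0 then cw q.1 else (0:ℂ)‖ ^ (2:ℝ≥0∞).toReal = 0 := by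
    intro q hq
    have : q.2 ≠ 0 := by
      intro h0
      exact hq ⟨q.1, by rw [Prod.ext_iff]; exact ⟨rfl, h0.symm⟩⟩
    rw [if_neg this, norm_zero, Real.zero_rpow hp2.ne']
  rw [← Function.Injective.summable_iff hinj hsupp]
  apply base_summable.congr
  intro k
  show (((k:ℝ)+1)⁻¹) ^ (2:ℕ) = ‖if ((k,0):ℕ×ℕ).2 = 0 then cw k else (0:ℂ)‖ ^ (2:ℝ≥0∞).toReal
  rw [if_pos (rfl : (0:ℕ) = 0), norm_cw, rpow_toReal_two]

def xel : Hsp := ⟨fun p : ℕ×ℕ => if p.2 = 0 then cw p.1 else 0, mem_xel⟩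

lemma mem_zel (n : ℕ) :
    Memℓp (fun p : ℕ×ℕ => if p.2 = n then cw p.1 / P p.1 0 n else 0) 2 := by
  apply memℓp_gen
  have hinj : Function.Injective (fun k : ℕ => ((k, n) : ℕ×ℕ)) := by
    intro a b h; simpa using h
  have hsupp : ∀ q ∉ Set.range (fun k : ℕ => ((k, n) : ℕ×ℕ)),
      ‖if q.2 = n then cw q.1 / P q.1 0 n else (0:ℂ)‖ ^ (2:ℝ≥0∞).toReal = 0 := by
    intro q hq
    have : q.2 ≠ n := by
      intro h0
      exact hq ⟨q.1, by rw [Prod.ext_iff]; exact ⟨rfl, h0.symm⟩⟩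
    rw [if_neg this, norm_zero, Real.zero_rpow hp2.ne']
  rw [← Function.Injective.summable_iff hinj hsupp]
  -- the composed function: k ↦ ‖cw k / P k 0 n‖ ^ 2
  have hshift : Summable (fun k : ℕ =>
      ‖if ((k+n, n) : ℕ×ℕ).2 = n then cw (k+n) / P (k+n) 0 n else (0:ℂ)‖ ^ (2:ℝ≥0∞).toReal) := by
    have hP : ∀ k : ℕ, P (k+n) 0 n = 1 := by
      intro k
      rw [P_eq, if_neg]
      simp only [Finset.mem_Ioc]
      omega
    have : Summable (fun k : ℕ => (((k:ℝ)+(n:ℝ)+1)⁻¹) ^ (2:ℕ)) := by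
      have h2 := base_summable.comp_injective (i := fun k : ℕ => k+n)
        (fun a b h => by simpa using h)
      apply h2.congr
      intro k
      simp only [Function.comp_apply]
      push_cast
      ring
    apply this.congr
    intro k
    rw [if_pos rfl, hP, div_one, norm_cw, rpow_toReal_two]
    push_cast
    ring
  apply Summable.congr
    (f := fun k : ℕ => ‖if ((k,n):ℕ×ℕ).2 = n then cw k / P k 0 n else (0:ℂ)‖ ^ (2:ℝ≥0∞).toReal)
  · exact (summable_nat_add_iff (k := n)).mp (hshift.congr (fun k => rfl))
  · intro k
    rfl

def zel (n : ℕ) : Hsp := ⟨fun p : ℕ×ℕ => if p.2 = n then cw p.1 / P p.1 0 n else 0, mem_zel n⟩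

lemma Top_pow_zel (n : ℕ) : (Top ^ n) (zel n) = xel := by
  ext p
  rcases p with ⟨k, j⟩
  rw [Top_pow]
  show P k j n * (if j + n = n then cw k / P k 0 n else 0) = (if j = 0 then cw k else 0)
  by_cases hj : j = 0
  · subst hj
    rw [if_pos (show 0 + n = n by omega), if_pos rfl, mul_comm,
      div_mul_cancel₀ _ (P_ne_zero k 0 n)]
  · rw [if_neg (show ¬(j + n = n) by omega), if_neg hj, mul_zero]

/-! separability -/

lemma sep_Hsp : TopologicalSpace.SeparableSpace Hsp := by
  rw [← TopologicalSpace.isSeparable_univ_iff]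
  have hsep : TopologicalSpace.IsSeparable
      (⋃ i : ℕ×ℕ, Set.range (fun c : ℂ => lp.single (E := ET) 2 i c)) := by
    refine TopologicalSpace.IsSeparable.iUnion (fun i => ?_)
    have hc : Continuous (fun c : ℂ => lp.single (E := ET) 2 i c) := by
      have h : (fun c : ℂ => lp.single (E := ET) 2 i c)
          = fun c : ℂ => c • lp.single (E := ET) 2 i (1:ℂ) := by
        funext c
        rw [← lp.single_smul]
        congr 1
        simp
      rw [h]
      exact continuous_id.smul continuous_const
    exact TopologicalSpace.isSeparable_range hc
  have hd : Dense (Submodule.span ℂ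
      (⋃ i : ℕ×ℕ, Set.range (fun c : ℂ => lp.single (E := ET) 2 i c)) : Set Hsp) := by
    intro f
    have hf := lp.hasSum_single (E := ET) ENNReal.ofNat_ne_top f
    refine mem_closure_of_tendsto hf ?_
    filter_upwards with t
    refine Submodule.sum_mem _ (fun i _ => Submodule.subset_span ?_)
    exact Set.mem_iUnion.2 ⟨i, Set.mem_range_self _⟩
  refine ((hsep.span (R := ℂ)).closure).mono ?_
  rw [hd.closure_eq]

/-! contraction facts -/

lemma Top_contr (y : Hsp) : ‖Top y‖ ≤ ‖y‖ := op_norm_le σT aT haT hσT y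
lemma Sop_contr (y : Hsp) : ‖Sop y‖ ≤ ‖y‖ := op_norm_le σS aS haS hσS y

lemma Sop_pow_contr (n : ℕ) (y : Hsp) : ‖(Sop ^ n) y‖ ≤ ‖y‖ := by
  induction n with
  | zero => simp
  | succ n ih =>
    rw [pow_succ', ContinuousLinearMap.mul_apply]
    exact (Sop_contr _).trans ih

/-! class C·₁ -/

lemma C1 (y : Hsp) (hy : y ≠ 0) :
    0 < Filter.liminf (fun n : ℕ => ‖((ContinuousLinearMap.adjoint Top) ^ n) y‖) Filter.atTop := by
  obtain ⟨p0, hp0⟩ : ∃ p0, y p0 ≠ 0 := by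
    by_contra h
    push_neg at h
    exact hy (lp.ext (funext h))
  have hεpos : 0 < ((p0.1:ℝ)+1)⁻¹ * ‖y p0‖ :=
    mul_pos (cw_inv_pos p0.1) (norm_pos_iff.2 hp0)
  have hlow : ∀ n : ℕ, ((p0.1:ℝ)+1)⁻¹ * ‖y p0‖ ≤ ‖(Sop ^ n) y‖ := by
    intro n
    have h1 : ‖((Sop ^ n) y) (p0.1, p0.2 + n)‖ ≤ ‖(Sop ^ n) y‖ :=
      lp.norm_apply_le_norm (by norm_num) _ _
    have h2 : ((Sop ^ n) y) (p0.1, p0.2 + n) = P p0.1 p0.2 n * y p0 := by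
      rw [Sop_pow]
    calc ((p0.1:ℝ)+1)⁻¹ * ‖y p0‖ ≤ ‖P p0.1 p0.2 n‖ * ‖y p0‖ :=
          mul_le_mul_of_nonneg_right (norm_P_ge _ _ _) (norm_nonneg _)
      _ = ‖((Sop ^ n) y) (p0.1, p0.2 + n)‖ := by rw [h2, norm_mul]
      _ ≤ _ := h1
  rw [adjoint_Top]
  have hbd : IsBoundedUnder (· ≤ ·) atTop (fun n : ℕ => ‖(Sop ^ n) y‖) :=
    Filter.isBoundedUnder_of ⟨‖y‖, fun n => Sop_pow_contr n y⟩
  calc (0:ℝ) < ((p0.1:ℝ)+1)⁻¹ * ‖y p0‖ := hεpos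
    _ ≤ liminf (fun n : ℕ => ‖(Sop ^ n) y‖) atTop :=
        Filter.le_liminf_of_le hbd.isCoboundedUnder_ge (Eventually.of_forall hlow)

/-! no bounded backward sequence -/

lemma xel_coord (k : ℕ) : (xel : Hsp) (k, 0) = cw k := by
  show (if (0:ℕ) = 0 then cw k else 0) = cw k
  rw [if_pos rfl]

lemma no_bounded :
    ¬ (∃ xs : ℕ → Hsp, xs 0 = xel ∧ (∀ n : ℕ, Top (xs (n + 1)) = xs n) ∧
        ∃ C : ℝ, ∀ n : ℕ, ‖xs n‖ ≤ C) := by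
  rintro ⟨xs, h0, hrec, C, hC⟩
  have hTn : ∀ n, (Top ^ n) (xs n) = xel := by
    intro n
    induction n with
    | zero => simpa using h0
    | succ n ih =>
      rw [pow_succ, ContinuousLinearMap.mul_apply, hrec n, ih]
  have hcoord : ∀ n k : ℕ, k + 1 ≤ n → ‖(xs n) (k, n)‖ = 1 := by
    intro n k hk
    have h1 := congrArg (fun f : Hsp => f (k, 0)) (hTn n)
    beta_reduce at h1
    rw [Top_pow, xel_coord, P_zero_left k n hk] at h1
    have h2 : (xs n) (k, 0 + n) = 1 :=
      mul_left_cancel₀ (cw_ne_zero k) (h1.trans (mul_one (cw k)).symm)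
    rw [Nat.zero_add] at h2
    rw [h2, norm_one]
  have key : ∀ n : ℕ, (n:ℝ) ≤ C ^ (2:ℕ) := by
    intro n
    have hinj : ∀ x ∈ Finset.range n, ∀ y ∈ Finset.range n,
        ((x, n) : ℕ×ℕ) = (y, n) → x = y := by
      intro a _ b _ h
      simpa using congrArg Prod.fst h
    have hs : ∑ q ∈ (Finset.range n).image (fun k => ((k, n) : ℕ×ℕ)),
        ‖(xs n) q‖ ^ (2:ℝ≥0∞).toReal ≤ ‖xs n‖ ^ (2:ℝ≥0∞).toReal :=
      lp.sum_rpow_le_norm_rpow hp2 _ _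
    rw [Finset.sum_image hinj] at hs
    have hval : ∑ k ∈ Finset.range n, ‖(xs n) (k, n)‖ ^ (2:ℝ≥0∞).toReal = n := by
      rw [Finset.sum_congr rfl (fun k hk => by
        rw [hcoord n k (Finset.mem_range.1 hk), Real.one_rpow])]
      simp
    rw [hval] at hs
    have hC0 : 0 ≤ C := le_trans (norm_nonneg _) (hC 0)
    calc (n:ℝ) ≤ ‖xs n‖ ^ (2:ℝ≥0∞).toReal := hs
      _ ≤ C ^ (2:ℝ≥0∞).toReal :=
          Real.rpow_le_rpow (norm_nonneg _) (hC n) hp2.le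
      _ = C ^ (2:ℕ) := rpow_toReal_two C
  obtain ⟨n, hn⟩ := exists_nat_gt (C ^ (2:ℕ))
  exact absurd (key n) (not_le.2 hn)

/-! surjectivity onto ran T^n -/

lemma ran_pow (n : ℕ) : ∃ z : Hsp, (Top ^ n) z = xel := ⟨zel n, Top_pow_zel n⟩

end Stmt8

open Stmt8 in
theorem stmt_8 :
    ∃ (H : Type) (_i1 : NormedAddCommGroup H)
      (_i2 : @InnerProductSpace ℂ H Complex.instRCLike _i1.toSeminormedAddCommGroup), by
      letI := _i1; letI := _i2
      exact ∃ _i3 : CompleteSpace H, by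
        letI := _i3
        exact TopologicalSpace.SeparableSpace H ∧
          ∃ (T : H →L[ℂ] H) (x : H),
            (∀ y : H, ‖T y‖ ≤ ‖y‖) ∧
            (∀ y : H, y ≠ 0 → 0 < Filter.liminf
              (fun n : ℕ => ‖((ContinuousLinearMap.adjoint T) ^ n) y‖) Filter.atTop) ∧
            (∀ n : ℕ, ∃ z : H, (T ^ n) z = x) ∧
            ¬ (∃ xs : ℕ → H, xs 0 = x ∧ (∀ n : ℕ, T (xs (n + 1)) = xs n) ∧
                ∃ C : ℝ, ∀ n : ℕ, ‖xs n‖ ≤ C) := by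
  exact ⟨Hsp, inferInstance, inferInstance, inferInstance, sep_Hsp, Top, xel,
    Top_contr, C1, ran_pow, no_bounded⟩
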